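/- Let Z, Z_1, Z_2, … be i.i.d. real-valued random variables with law P0 having finite moment generating function E_{P0}[e^{λZ}] < ∞ for every λ ∈ ℝ, and suppose that inf_{λ∈ℝ} E_{P0}[e^{λZ}] is attained at a unique λ* ∈ ℝ. Then the plug-in estimator ŝ_n = inf_{λ∈ℝ} (1/n) Σ_{i=1}^n e^{λ Z_i} converges in probability to inf_{λ∈ℝ} E_{P0}[e^{λZ}] as n → ∞. -/

import Mathlib

open MeasureTheory ProbabilityTheory Real Filter Topology
open scoped ENNReal NNReal Classical

/-- Kullback–Leibler divergence `D_KL(P‖P₀)`, valued in `ℝ≥0∞`: it is the integral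
`∫ log (dP/dP₀) dP` when `P ≪ P₀` (and the integrand is integrable), and `+∞` otherwise. -/
noncomputable def KLdiv {α : Type*} [MeasurableSpace α] (P P₀ : Measure α) : ℝ≥0∞ :=
  if P ≪ P₀ ∧ Integrable (llr P P₀) P then ENNReal.ofReal (∫ x, llr P P₀ x ∂P) else ⊤

/-- `exp(−D_KL(P‖P₀))`, with the convention `exp(−∞) = 0`. -/
noncomputable def expNegKL {α : Type*} [MeasurableSpace α] (P P₀ : Measure α) : ℝ :=
  if KLdiv P P₀ = ⊤ then 0 else Real.exp (-(KLdiv P P₀).toReal)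

/-- consistency of the plug-in estimator of the s-value of the mean:
for i.i.d. `Z₁, Z₂, …` with law `P₀` having finite MGF whose infimum is attained at a unique
`λ*`, the estimator `ŝ_n = inf_λ (1/n) ∑_{i<n} e^{λ Z_i}` converges in probability to
`inf_λ E_{P₀}[e^{λZ}]`. -/

lemma aux_chord {f : ℝ → ℝ} (hf : ConvexOn ℝ Set.univ f) {u v x : ℝ} (huv : u < v)
    (hx1 : u ≤ x) (hx2 : x ≤ v) :
    (v - u) * f x ≤ (v - x) * f u + (x - u) * f v := by
  have hvu : (0:ℝ) < v - u := by linarith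
  have ht : (0:ℝ) ≤ (v - x) / (v - u) := div_nonneg (by linarith) (le_of_lt hvu)
  have hs : (0:ℝ) ≤ (x - u) / (v - u) := div_nonneg (by linarith) (le_of_lt hvu)
  have hts : (v - x) / (v - u) + (x - u) / (v - u) = 1 := by field_simp; ring
  have h := hf.2 (Set.mem_univ u) (Set.mem_univ v) ht hs hts
  rw [smul_eq_mul, smul_eq_mul] at h
  have hxe : (v - x) / (v - u) * u + (x - u) / (v - u) * v = x := by field_simp; ring
  rw [hxe] at h
  have := mul_le_mul_of_nonneg_left h (le_of_lt hvu)
  calc (v - u) * f x ≤ (v - u) * ((v - x) / (v - u) * f u + (x - u) / (v - u) * f v) := this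
    _ = (v - x) * f u + (x - u) * f v := by field_simp

lemma aux_outside_left {f : ℝ → ℝ} (hf : ConvexOn ℝ Set.univ f) {l a c : ℝ}
    (h1 : l < a) (h2 : a < c) (h3 : f c ≤ f a) : f a ≤ f l := by
  have := aux_chord hf (u := l) (v := c) (x := a) (by linarith) (by linarith) (by linarith)
  nlinarith

lemma aux_outside_right {f : ℝ → ℝ} (hf : ConvexOn ℝ Set.univ f) {c b l : ℝ}
    (h1 : c < b) (h2 : b < l) (h3 : f c ≤ f b) : f b ≤ f l := by
  have := aux_chord hf (u := c) (v := l) (x := b) (by linarith) (by linarith) (by linarith)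
  nlinarith

lemma aux_three_point {f : ℝ → ℝ} (hf : ConvexOn ℝ Set.univ f) {l p q : ℝ}
    (h1 : l ≤ p) (h2 : p < q) (h3 : 2 * p - q ≤ l) :
    f p - |f p - f q| ≤ f l := by
  rcases eq_or_lt_of_le h1 with rfl | h1
  · have : (0:ℝ) ≤ |f l - f q| := abs_nonneg _
    linarith
  have hchord := aux_chord hf (u := l) (v := q) (x := p) (by linarith) (by linarith) (by linarith)
  have hD1 : f p - f q ≤ |f p - f q| := le_abs_self _
  have hD2 : -(f p - f q) ≤ |f p - f q| := neg_le_abs _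
  have hD0 : (0:ℝ) ≤ |f p - f q| := abs_nonneg _
  nlinarith [mul_le_mul_of_nonneg_left hD2 (show (0:ℝ) ≤ p - l by linarith),
    mul_le_mul_of_nonneg_right hD0 (show (0:ℝ) ≤ (q - p) - (p - l) by linarith)]

lemma aux_iInf_rat {g : ℝ → ℝ} (hg : Continuous g) (h0 : ∀ x, 0 ≤ g x) :
    ⨅ l : ℝ, g l = ⨅ q : ℚ, g q := by
  have hbdd : BddBelow (Set.range g) := ⟨0, by rintro _ ⟨l, rfl⟩; exact h0 l⟩
  have hbdd2 : BddBelow (Set.range fun q : ℚ => g q) := ⟨0, by rintro _ ⟨q, rfl⟩; exact h0 q⟩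
  refine le_antisymm (le_ciInf fun q => ciInf_le hbdd (q : ℝ)) (le_ciInf fun l => ?_)
  refine le_of_forall_pos_le_add fun ε hε => ?_
  obtain ⟨δ, hδ, hcont⟩ := Metric.continuousAt_iff.1 (hg.continuousAt (x := l)) ε hε
  obtain ⟨q, hq⟩ := exists_rat_near l hδ
  have hd : dist (q : ℝ) l < δ := by
    rw [Real.dist_eq, abs_sub_comm]; exact hq
  have h2 := hcont hd
  rw [Real.dist_eq] at h2
  have h3 : g q ≤ g l + ε := by
    rcases abs_lt.1 h2 with ⟨h4, h5⟩; linarith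
  exact (ciInf_le hbdd2 q).trans h3


lemma aux_det {psi : ℝ → ℝ} {lstar : ℝ} (hψc : Continuous psi)
    (hmin : ∀ l, psi lstar ≤ psi l)
    (huniq : ∀ x : ℝ, (∀ l, psi x ≤ psi l) → x = lstar)
    {f : ℕ → ℝ → ℝ} (hconv : ∀ n, ConvexOn ℝ Set.univ (f n))
    (hpos : ∀ n l, 0 ≤ f n l)
    (htend : ∀ q : ℚ, Tendsto (fun n => f n (q : ℝ)) atTop (𝓝 (psi (q : ℝ)))) :
    Tendsto (fun n => ⨅ l : ℝ, f n l) atTop (𝓝 (psi lstar)) := by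
  have hbdd : ∀ n, BddBelow (Set.range (f n)) :=
    fun n => ⟨0, by rintro _ ⟨l, rfl⟩; exact hpos n l⟩
  rw [tendsto_order]
  constructor
  · -- lower bound
    intro c hc
    have hηpos : 0 < (psi lstar - c) / 5 := by linarith
    set η := (psi lstar - c) / 5 with hη
    obtain ⟨a, ha1, ha2⟩ := exists_rat_btwn (show lstar - 1 < lstar by linarith)
    obtain ⟨b, hb1, hb2⟩ := exists_rat_btwn (show lstar < lstar + 1 by linarith)
    have hab : (a : ℝ) < b := lt_trans ha2 hb1
    have hstrict : ∀ x : ℝ, x ≠ lstar → psi lstar < psi x := by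
      intro x hx
      rcases lt_or_eq_of_le (hmin x) with h | h
      · exact h
      · exact absurd (huniq x fun l => h ▸ hmin l) hx
    have hψa : psi lstar < psi a := hstrict a (ne_of_lt ha2)
    have hψb : psi lstar < psi b := hstrict b (ne_of_gt hb1)
    have hsm : psi lstar < min (psi a) (psi b) := lt_min hψa hψb
    set m := min (psi a) (psi b) with hm
    have hma : m ≤ psi a := min_le_left _ _
    have hmb : m ≤ psi b := min_le_right _ _
    -- choose rational q₀ ∈ (a, b) with psi q₀ < m
    have hnhds : psi ⁻¹' Set.Iio m ∩ Set.Ioo (a : ℝ) b ∈ 𝓝 lstar := by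
      refine Filter.inter_mem (hψc.continuousAt (Iio_mem_nhds hsm)) ?_
      exact Ioo_mem_nhds ha2 hb1
    obtain ⟨δ₁, hδ₁, hball⟩ := Metric.mem_nhds_iff.1 hnhds
    obtain ⟨q₀, hq₀⟩ := exists_rat_near lstar hδ₁
    have hq₀mem : (q₀ : ℝ) ∈ psi ⁻¹' Set.Iio m ∩ Set.Ioo (a : ℝ) b := by
      apply hball
      rw [Metric.mem_ball, Real.dist_eq, abs_sub_comm]
      exact hq₀
    have hψq₀ : psi (q₀ : ℝ) < m := hq₀mem.1
    have haq₀ : (a : ℝ) < q₀ := hq₀mem.2.1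
    have hq₀b : (q₀ : ℝ) < b := hq₀mem.2.2
    have hγpos : 0 < (m - psi q₀) / 2 := by linarith
    set γ := (m - psi (q₀ : ℝ)) / 2 with hγ
    -- uniform continuity on a compact set
    have hucont := (isCompact_Icc (a := (a : ℝ) - 1)
      (b := (b : ℝ) + 1)).uniformContinuousOn_of_continuous hψc.continuousOn
    obtain ⟨δ₂, hδ₂, hUC⟩ := Metric.uniformContinuousOn_iff.1 hucont η hηpos
    -- choose N and the grid
    have hdpos : 0 < min δ₂ (1/2 : ℝ) := lt_min hδ₂ (by norm_num)
    obtain ⟨N, hN⟩ := exists_nat_gt (((b : ℝ) - a) / min δ₂ (1/2 : ℝ))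
    have hNpos : 0 < (N : ℝ) :=
      lt_of_le_of_lt (div_nonneg (by linarith) (le_of_lt hdpos)) hN
    have hN0' : (N : ℝ) ≠ 0 := ne_of_gt hNpos
    have hblt : (b : ℝ) - a < (N : ℝ) * min δ₂ (1/2 : ℝ) := (div_lt_iff₀ hdpos).1 hN
    have hstd : ((b : ℝ) - a) / (N : ℝ) < min δ₂ (1/2 : ℝ) := by
      rw [div_lt_iff₀ hNpos, mul_comm]
      exact hblt
    obtain ⟨st, x, hsteppos, hstepδ₂, hstephalf, hNs, hxcast⟩ :
        ∃ (st : ℝ) (x : ℕ → ℚ), 0 < st ∧ st < δ₂ ∧ st ≤ 1/2 ∧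
          (N : ℝ) * st = (b : ℝ) - a ∧ ∀ j : ℕ, ((x j : ℚ) : ℝ) = (a : ℝ) + j * st := by
      refine ⟨((b : ℝ) - a) / (N : ℝ), fun j => a + j * ((b - a) / (N : ℚ)), ?_, ?_, ?_, ?_, ?_⟩
      · exact div_pos (by linarith) hNpos
      · exact lt_of_lt_of_le hstd (min_le_left _ _)
      · exact le_of_lt (lt_of_lt_of_le hstd (min_le_right _ _))
      · field_simp
      · intro j; push_cast; ring
    have hx0 : ((x 0 : ℚ) : ℝ) = (a : ℝ) := by rw [hxcast]; simp
    have hxN : ((x N : ℚ) : ℝ) = (b : ℝ) := by rw [hxcast]; linarith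
    -- eventual closeness at grid points and q₀
    have hev1 : ∀ᶠ n in atTop, ∀ j ∈ Finset.range (N + 3),
        |f n (x j) - psi (x j)| < min η γ := by
      rw [Filter.eventually_all_finset]
      intro j _
      have := Metric.tendsto_nhds.1 (htend (x j)) (min η γ) (lt_min hηpos hγpos)
      simpa [Real.dist_eq] using this
    have hev2 : ∀ᶠ n in atTop, |f n q₀ - psi q₀| < γ := by
      have := Metric.tendsto_nhds.1 (htend q₀) γ hγpos
      simpa [Real.dist_eq] using this
    filter_upwards [hev1, hev2] with n hn hnq₀
    have hfa : |f n a - psi a| < min η γ := by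
      have := hn 0 (by simp)
      rwa [show ((x 0 : ℚ) : ℝ) = ((a : ℚ) : ℝ) from hx0] at this
    have hfb : |f n b - psi b| < min η γ := by
      have h := hn N (Finset.mem_range.2 (by omega))
      rwa [show ((x N : ℚ) : ℝ) = ((b : ℚ) : ℝ) from hxN] at h
    have hfaη : psi a - η < f n a :=
      by have := (abs_lt.1 (lt_of_lt_of_le hfa (min_le_left _ _))).1; linarith
    have hfbη : psi b - η < f n b :=
      by have := (abs_lt.1 (lt_of_lt_of_le hfb (min_le_left _ _))).1; linarith
    have hfaγ : psi a - γ < f n a :=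
      by have := (abs_lt.1 (lt_of_lt_of_le hfa (min_le_right _ _))).1; linarith
    have hfbγ : psi b - γ < f n b :=
      by have := (abs_lt.1 (lt_of_lt_of_le hfb (min_le_right _ _))).1; linarith
    have hq₀γ : f n q₀ < psi q₀ + γ := by
      have := (abs_lt.1 hnq₀).2; linarith
    have hq₀a : f n q₀ ≤ f n a := by
      have : psi (q₀ : ℝ) + γ ≤ psi a - γ := by
        rw [hγ]; linarith
      linarith
    have hq₀bb : f n q₀ ≤ f n b := by
      have : psi (q₀ : ℝ) + γ ≤ psi b - γ := by
        rw [hγ]; linarith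
      linarith
    -- the key pointwise lower bound
    have key : ∀ l : ℝ, psi lstar - 4 * η ≤ f n l := by
      intro l
      rcases lt_or_ge l (a : ℝ) with hla | hla
      · have hout := aux_outside_left (hconv n) hla haq₀ hq₀a
        linarith [hmin (a : ℝ)]
      rcases le_or_gt l (b : ℝ) with hlb | hlb
      · -- grid case : a ≤ l ≤ b
        obtain ⟨j, hj1, hj2, hjN⟩ : ∃ j : ℕ, ((x j : ℚ) : ℝ) ≤ l ∧
            l < ((x (j+1) : ℚ) : ℝ) ∧ j ≤ N := by
          refine ⟨⌊(l - a) / st⌋₊, ?_, ?_, ?_⟩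
          · rw [hxcast]
            have h1 : (⌊(l - a) / st⌋₊ : ℝ) ≤ (l - a) / st :=
              Nat.floor_le (div_nonneg (by linarith) (le_of_lt hsteppos))
            rw [le_div_iff₀ hsteppos] at h1
            linarith
          · rw [hxcast]
            have h2 : (l - a) / st < (⌊(l - a) / st⌋₊ : ℝ) + 1 :=
              Nat.lt_floor_add_one _
            rw [div_lt_iff₀ hsteppos] at h2
            push_cast
            linarith
          · have h1 : (⌊(l - a) / st⌋₊ : ℝ) ≤ (l - a) / st :=
              Nat.floor_le (div_nonneg (by linarith) (le_of_lt hsteppos))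
            have h3 : (l - a) / st ≤ (N : ℝ) := by
              rw [div_le_iff₀ hsteppos]
              linarith [hNs]
            exact_mod_cast h1.trans h3
        have hmemK : ∀ k : ℕ, k ≤ N + 2 →
            ((x k : ℚ) : ℝ) ∈ Set.Icc ((a : ℝ) - 1) ((b : ℝ) + 1) := by
          intro k hk
          rw [hxcast, Set.mem_Icc]
          have hk0 : (0:ℝ) ≤ (k : ℝ) * st :=
            mul_nonneg (Nat.cast_nonneg k) (le_of_lt hsteppos)
          have hkr : (k : ℝ) ≤ (N : ℝ) + 2 := by exact_mod_cast hk
          have hkk : (k : ℝ) * st ≤ ((N : ℝ) + 2) * st :=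
            mul_le_mul_of_nonneg_right hkr (le_of_lt hsteppos)
          have hexp : ((N : ℝ) + 2) * st
              = (N : ℝ) * st + 2 * st := by ring
          constructor
          · linarith
          · linarith [hNs]
        have hpq : |psi (x (j+1)) - psi (x (j+2))| < η := by
          have h1 := hUC _ (hmemK (j+1) (by omega)) _ (hmemK (j+2) (by omega)) ?_
          · rwa [Real.dist_eq] at h1
          · rw [Real.dist_eq, hxcast, hxcast]
            have heq : ((a : ℝ) + (↑(j+1)) * st)
                - ((a : ℝ) + (↑(j+2)) * st) = -st := by
              push_cast; ring
            rw [heq, abs_neg, abs_of_pos hsteppos]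
            exact hstepδ₂
        have hord : ((x (j+1) : ℚ) : ℝ) < ((x (j+2) : ℚ) : ℝ) := by
          rw [hxcast, hxcast]
          push_cast
          linarith [hsteppos]
        have hmid : 2 * ((x (j+1) : ℚ) : ℝ) - ((x (j+2) : ℚ) : ℝ) ≤ l := by
          have heq : 2 * ((x (j+1) : ℚ) : ℝ) - ((x (j+2) : ℚ) : ℝ) = ((x j : ℚ) : ℝ) := by
            rw [hxcast, hxcast, hxcast]; push_cast; ring
          rw [heq]; exact hj1
        have h3pt := aux_three_point (hconv n) (le_of_lt hj2) hord hmid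
        have hfp : |f n (x (j+1)) - psi (x (j+1))| < η :=
          lt_of_lt_of_le (hn (j+1) (Finset.mem_range.2 (by omega))) (min_le_left _ _)
        have hfq : |f n (x (j+2)) - psi (x (j+2))| < η :=
          lt_of_lt_of_le (hn (j+2) (Finset.mem_range.2 (by omega))) (min_le_left _ _)
        have hdiff : |f n (x (j+1)) - f n (x (j+2))| < 3 * η := by
          have t1 := abs_sub_le (f n (x (j+1))) (psi (x (j+1))) (f n (x (j+2)))
          have t2 := abs_sub_le (psi (x (j+1))) (psi (x (j+2))) (f n (x (j+2)))
          have t3 : |psi (x (j+2)) - f n (x (j+2))| < η := by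
            rw [abs_sub_comm]; exact hfq
          linarith
        have hfp' : psi (x (j+1)) - η < f n (x (j+1)) :=
          by have := (abs_lt.1 hfp).1; linarith
        have hsp : psi lstar ≤ psi (x (j+1)) := hmin _
        have habs : f n (x (j+1)) - |f n (x (j+1)) - f n (x (j+2))| ≤ f n l := h3pt
        have h0 : (0:ℝ) ≤ |f n (x (j+1)) - f n (x (j+2))| := abs_nonneg _
        linarith
      · -- b < l
        have hout := aux_outside_right (hconv n) hq₀b hlb hq₀bb
        linarith [hmin (b : ℝ)]
    have hle : psi lstar - 4 * η ≤ ⨅ l : ℝ, f n l := le_ciInf key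
    have hlt : c < psi lstar - 4 * η := by rw [hη]; linarith
    linarith
  · -- upper bound
    intro c hc
    have hnhds : psi ⁻¹' Set.Iio c ∈ 𝓝 lstar := hψc.continuousAt (Iio_mem_nhds hc)
    obtain ⟨δ, hδ, hball⟩ := Metric.mem_nhds_iff.1 hnhds
    obtain ⟨q, hq⟩ := exists_rat_near lstar hδ
    have hqmem : psi (q : ℝ) < c := by
      have : (q : ℝ) ∈ Metric.ball lstar δ := by
        rw [Metric.mem_ball, Real.dist_eq, abs_sub_comm]; exact hq
      exact hball this
    have hev := (htend q).eventually_lt_const hqmem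
    filter_upwards [hev] with n hn
    exact lt_of_le_of_lt (ciInf_le (hbdd n) (q : ℝ)) hn

theorem plugin_svalue_mean_consistent {Ω : Type*} [MeasurableSpace Ω]
    (μ : Measure Ω) [IsProbabilityMeasure μ]
    (P₀ : Measure ℝ) [IsProbabilityMeasure P₀]
    (Z : ℕ → Ω → ℝ) (hmeas : ∀ i, Measurable (Z i))
    (hlaw : ∀ i, μ.map (Z i) = P₀)
    (hindep : iIndepFun Z μ)
    (hmgf : ∀ l : ℝ, Integrable (fun z => Real.exp (l * z)) P₀)
    (huniq : ∃! lstar : ℝ,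
      ∀ l : ℝ, ∫ z, Real.exp (lstar * z) ∂P₀ ≤ ∫ z, Real.exp (l * z) ∂P₀) :
    TendstoInMeasure μ
      (fun (n : ℕ) ω => ⨅ l : ℝ, (n : ℝ)⁻¹ * ∑ i ∈ Finset.range n, Real.exp (l * Z i ω))
      Filter.atTop
      (fun _ => ⨅ l : ℝ, ∫ z, Real.exp (l * z) ∂P₀) := by
  obtain ⟨lstar, hl1, hl2⟩ := huniq
  set ψ : ℝ → ℝ := fun l => ∫ z, Real.exp (l * z) ∂P₀ with hψ
  -- continuity of ψ
  have hψc : Continuous ψ := by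
    rw [continuous_iff_continuousAt]
    intro l₀
    apply continuousAt_of_dominated (bound := fun z => exp ((l₀+1) * z) + exp ((l₀-1) * z))
    · exact Filter.Eventually.of_forall fun l =>
        ((Real.continuous_exp.comp (continuous_const.mul continuous_id)).aestronglyMeasurable)
    · filter_upwards [Metric.ball_mem_nhds l₀ one_pos] with l hl
      apply Filter.Eventually.of_forall
      intro z
      rw [Metric.mem_ball, Real.dist_eq] at hl
      rcases abs_lt.1 hl with ⟨h1, h2⟩
      rw [Real.norm_eq_abs, abs_of_pos (exp_pos _)]
      rcases le_or_gt 0 z with hz | hz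
      · have hle : l * z ≤ (l₀+1) * z := mul_le_mul_of_nonneg_right (by linarith) hz
        have := exp_le_exp.2 hle
        linarith [exp_pos ((l₀-1) * z)]
      · have hle : l * z ≤ (l₀-1) * z := by nlinarith
        have := exp_le_exp.2 hle
        linarith [exp_pos ((l₀+1) * z)]
    · exact (hmgf (l₀+1)).add (hmgf (l₀-1))
    · exact Filter.Eventually.of_forall fun z =>
        (Real.continuous_exp.comp (continuous_id.mul continuous_const)).continuousAt
  -- empirical functions
  have hpos : ∀ (n : ℕ) (ω : Ω) (l : ℝ),
      0 ≤ (n : ℝ)⁻¹ * ∑ i ∈ Finset.range n, Real.exp (l * Z i ω) := by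
    intro n ω l
    exact mul_nonneg (by positivity) (Finset.sum_nonneg fun i _ => (exp_pos _).le)
  have hcont : ∀ (n : ℕ) (ω : Ω),
      Continuous (fun l : ℝ => (n : ℝ)⁻¹ * ∑ i ∈ Finset.range n, Real.exp (l * Z i ω)) := by
    intro n ω
    exact continuous_const.mul (continuous_finset_sum _ fun i _ =>
      Real.continuous_exp.comp (continuous_id.mul continuous_const))
  have hconvf : ∀ (n : ℕ) (ω : Ω), ConvexOn ℝ Set.univ
      (fun l : ℝ => (n : ℝ)⁻¹ * ∑ i ∈ Finset.range n, Real.exp (l * Z i ω)) := by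
    intro n ω
    refine ⟨convex_univ, ?_⟩
    intro p _ r _ tp tr htp htr hsum
    simp only [smul_eq_mul]
    have hterm : ∀ i ∈ Finset.range n, Real.exp ((tp * p + tr * r) * Z i ω)
        ≤ tp * Real.exp (p * Z i ω) + tr * Real.exp (r * Z i ω) := by
      intro i _
      have h := convexOn_exp.2 (Set.mem_univ (p * Z i ω)) (Set.mem_univ (r * Z i ω)) htp htr hsum
      simp only [smul_eq_mul] at h
      rw [show (tp * p + tr * r) * Z i ω = tp * (p * Z i ω) + tr * (r * Z i ω) from by ring]
      exact h
    calc (n : ℝ)⁻¹ * ∑ i ∈ Finset.range n, Real.exp ((tp * p + tr * r) * Z i ω)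
        ≤ (n : ℝ)⁻¹ * ∑ i ∈ Finset.range n,
            (tp * Real.exp (p * Z i ω) + tr * Real.exp (r * Z i ω)) :=
          mul_le_mul_of_nonneg_left (Finset.sum_le_sum hterm) (by positivity)
      _ = tp * ((n : ℝ)⁻¹ * ∑ i ∈ Finset.range n, Real.exp (p * Z i ω))
            + tr * ((n : ℝ)⁻¹ * ∑ i ∈ Finset.range n, Real.exp (r * Z i ω)) := by
          rw [Finset.sum_add_distrib, ← Finset.mul_sum, ← Finset.mul_sum]; ring
  -- strong law at each rational
  have hSL : ∀ q : ℚ, ∀ᵐ ω ∂μ, Filter.Tendsto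
      (fun n : ℕ => (n : ℝ)⁻¹ * ∑ i ∈ Finset.range n, Real.exp ((q : ℝ) * Z i ω))
      Filter.atTop (𝓝 (ψ (q : ℝ))) := by
    intro q
    have hgm : Measurable fun z : ℝ => Real.exp ((q : ℝ) * z) :=
      (measurable_const.mul measurable_id).exp
    have h1 : Integrable (fun z : ℝ => Real.exp ((q : ℝ) * z)) (μ.map (Z 0)) := by
      rw [hlaw 0]; exact hmgf q
    have hint : Integrable (fun ω => Real.exp ((q : ℝ) * Z 0 ω)) μ :=
      (integrable_map_measure hgm.aestronglyMeasurable (hmeas 0).aemeasurable).1 h1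
    have hidZ : ∀ i, IdentDistrib (Z i) (Z 0) μ μ := fun i =>
      ⟨(hmeas i).aemeasurable, (hmeas 0).aemeasurable, by rw [hlaw i, hlaw 0]⟩
    have hSL0 := strong_law_ae_real (fun i ω => Real.exp ((q : ℝ) * Z i ω)) hint
      (fun i j hij => (hindep.indepFun hij).comp hgm hgm)
      (fun i => (hidZ i).comp hgm)
    have hexp : ψ (q : ℝ) = ∫ ω, Real.exp ((q : ℝ) * Z 0 ω) ∂μ := by
      show (∫ z, Real.exp ((q : ℝ) * z) ∂P₀) = _
      rw [← hlaw 0, integral_map (hmeas 0).aemeasurable hgm.aestronglyMeasurable]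
    filter_upwards [hSL0] with ω hω
    rw [← hexp] at hω
    have : (fun n : ℕ => (n : ℝ)⁻¹ * ∑ i ∈ Finset.range n, Real.exp ((q : ℝ) * Z i ω))
        = fun n : ℕ => (∑ i ∈ Finset.range n, Real.exp ((q : ℝ) * Z i ω)) / (n : ℝ) := by
      funext n; rw [div_eq_inv_mul]
    rw [this]
    exact hω
  have hae : ∀ᵐ ω ∂μ, ∀ q : ℚ, Filter.Tendsto
      (fun n : ℕ => (n : ℝ)⁻¹ * ∑ i ∈ Finset.range n, Real.exp ((q : ℝ) * Z i ω))
      Filter.atTop (𝓝 (ψ (q : ℝ))) := ae_all_iff.2 hSL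
  -- measurability of the estimator
  have hmeasf : ∀ n : ℕ, AEStronglyMeasurable
      (fun ω => ⨅ l : ℝ, (n : ℝ)⁻¹ * ∑ i ∈ Finset.range n, Real.exp (l * Z i ω)) μ := by
    intro n
    have heq : (fun ω => ⨅ l : ℝ, (n : ℝ)⁻¹ * ∑ i ∈ Finset.range n, Real.exp (l * Z i ω))
        = fun ω => ⨅ q : ℚ, (n : ℝ)⁻¹ * ∑ i ∈ Finset.range n, Real.exp ((q : ℝ) * Z i ω) := by
      funext ω
      exact aux_iInf_rat (hcont n ω) (hpos n ω)
    rw [heq]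
    apply Measurable.aestronglyMeasurable
    apply Measurable.iInf
    intro q
    exact (Finset.measurable_sum _ fun i _ => ((hmeas i).const_mul _).exp).const_mul _
  -- the infimum of ψ is attained at lstar
  have hinf_eq : (⨅ l : ℝ, ∫ z, Real.exp (l * z) ∂P₀) = ψ lstar :=
    le_antisymm
      (ciInf_le ⟨ψ lstar, by rintro _ ⟨l, rfl⟩; exact hl1 l⟩ lstar)
      (le_ciInf hl1)
  have hgoal : (fun _ : Ω => ⨅ l : ℝ, ∫ z, Real.exp (l * z) ∂P₀) = fun _ : Ω => ψ lstar := by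
    funext ω; exact hinf_eq
  rw [hgoal]
  apply tendstoInMeasure_of_tendsto_ae hmeasf
  filter_upwards [hae] with ω hω
  exact aux_det hψc hl1 hl2 (fun n => hconvf n ω) (fun n => hpos n ω) hω
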